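/- In Ā[r] the identity η_R(a_3a_4) − a_3a_4 = 2r·(a_3^2 + 2a_2a_4) − a_2·(a_4r + a_3r^2 + a_2r^3) holds, where η_R(a_3a_4) = η_R(a_3)·η_R(a_4). -/

import Mathlib

/-!
`Abar = 𝔽_5[a_2,a_3,a_4]` (the variable `0,1,2 : Fin 3` are `a_2, a_3, a_4`),
`q(t) = t^5 + a_2t^3 + a_3t^2 + a_4t`, and `etaR : Abar → Abar[r]` is the
𝔽_5-algebra map sending `a_i` to the coefficient of `x^{5-i}` in `q(x+r) - q(r)`,
computed in `Abar[r][x]`.  This is the reduction modulo `(5, a_1, a_5)` of the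
Gorbounov–Hopkins–Mahowald Hopf algebroid at the prime `5`.
-/

/-- The ring `Ā = 𝔽_5[a_2,a_3,a_4]`. -/
abbrev Abar : Type := MvPolynomial (Fin 3) (ZMod 5)

/-- The generator `a_2`. -/
noncomputable def a2 : Abar := MvPolynomial.X 0
/-- The generator `a_3`. -/
noncomputable def a3 : Abar := MvPolynomial.X 1
/-- The generator `a_4`. -/
noncomputable def a4 : Abar := MvPolynomial.X 2

/-- The polynomial `q(t) = t^5 + a_2t^3 + a_3t^2 + a_4t` as an element of `Ā[t]`. -/
noncomputable def q : Polynomial Abar :=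
  Polynomial.X ^ 5 + Polynomial.C a2 * Polynomial.X ^ 3 + Polynomial.C a3 * Polynomial.X ^ 2 +
    Polynomial.C a4 * Polynomial.X

/-- `q(x+r) - q(r)`, an element of `Ā[r][x]` (the inner variable is `r`, the outer is `x`). -/
noncomputable def qShift : Polynomial (Polynomial Abar) :=
  Polynomial.eval₂ (Polynomial.C.comp Polynomial.C)
      (Polynomial.X + Polynomial.C Polynomial.X) q -
    Polynomial.eval₂ (Polynomial.C.comp Polynomial.C) (Polynomial.C Polynomial.X) q

/-- The right unit `η_R : Ā → Ā[r]`, sending `a_i` (for `i = 2,3,4`) to the coefficient of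
`x^{5-i}` in `q(x+r) - q(r)`. -/
noncomputable def etaR : Abar →ₐ[ZMod 5] Polynomial Abar :=
  MvPolynomial.aeval (fun k : Fin 3 => qShift.coeff (3 - k.1))

open Polynomial in
lemma qShift_coeffk (k : ℕ) : qShift.coeff k =
    X ^ (5 - k) * (Nat.choose 5 k : Polynomial Abar) - (C X ^ 5).coeff k
    + C a2 * (X ^ (3 - k) * (Nat.choose 3 k : Polynomial Abar) - (C X ^ 3).coeff k)
    + C a3 * (X ^ (2 - k) * (Nat.choose 2 k : Polynomial Abar) - (C X ^ 2).coeff k)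
    + C a4 * ((X + C X).coeff k - (C X).coeff k) := by
  simp only [qShift, q, eval₂_add, eval₂_mul, eval₂_pow, eval₂_X, eval₂_C,
    RingHom.coe_comp, Function.comp_apply, C_mul_X_pow_eq_monomial, eval₂_monomial,
    eval₂_mul_X, eval₂_X_pow]
  simp only [coeff_sub, coeff_add, coeff_C_mul, coeff_X_add_C_pow]
  ring

open Polynomial in
lemma five_eq_zero : (5 : Polynomial Abar) = 0 := by
  rw [← map_ofNat (C : Abar →+* Polynomial Abar) 5,
    ← map_ofNat (MvPolynomial.C : ZMod 5 →+* Abar) 5,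
    show (5 : ZMod 5) = 0 from rfl]
  simp

open Polynomial in
lemma ten_eq_zero : ((Nat.choose 5 2 : ℕ) : Polynomial Abar) = 0 := by
  show ((10:ℕ) : Polynomial Abar) = 0
  have : ((10:ℕ) : Polynomial Abar) = 2 * 5 := by push_cast; ring
  rw [this, five_eq_zero, mul_zero]

open Polynomial in
lemma qShift_coeff2 : qShift.coeff 2 = C a3 + 3 * C a2 * X := by
  rw [qShift_coeffk]
  simp only [← C_pow, coeff_C, coeff_add, coeff_X]
  norm_num [ten_eq_zero]
  ring

open Polynomial in
lemma qShift_coeff1 : qShift.coeff 1 = C a4 + 2 * C a3 * X + 3 * C a2 * X ^ 2 := by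
  rw [qShift_coeffk]
  simp only [← C_pow, coeff_C, coeff_add, coeff_X]
  norm_num
  rw [five_eq_zero]
  ring

/-- `η_R(a_3a_4) − a_3a_4 = 2r·(a_3² + 2a_2a_4) − a_2·(a_4r + a_3r² + a_2r³)` in `Ā[r]`. -/
theorem coboundary_a3a4 :
    etaR (a3 * a4) - Polynomial.C (a3 * a4) =
      2 * Polynomial.X * Polynomial.C (a3 ^ 2 + 2 * a2 * a4) -
        Polynomial.C a2 *
          (Polynomial.C a4 * Polynomial.X + Polynomial.C a3 * Polynomial.X ^ 2 +
            Polynomial.C a2 * Polynomial.X ^ 3) := by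
  have h3 : etaR a3 = qShift.coeff 2 := by simp [etaR, a3]
  have h4 : etaR a4 = qShift.coeff 1 := by simp [etaR, a4]
  rw [map_mul, h3, h4, qShift_coeff2, qShift_coeff1]
  simp only [map_mul, map_add, map_pow, map_ofNat]
  linear_combination (2 * Polynomial.C a2 * Polynomial.C a3 * Polynomial.X ^ 2 +
    2 * Polynomial.C a2 * Polynomial.C a2 * Polynomial.X ^ 3) * five_eq_zero
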